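/- Let τ be a real number with 2 < τ < 3 and let μ > 0. Then lim_{B → ∞} B² ∫₀^∞ ∫₀^∞ (x y)^{−τ} (1 − e^{−x})(1 − e^{−y})(1 − e^{−μ x y / B²}) dx dy = μ · ( ∫₀^∞ x^{1−τ}(1 − e^{−x}) dx )². -/

import Mathlib

open MeasureTheory Filter Set

lemma aux_nonneg {x : ℝ} (hx : 0 ≤ x) : 0 ≤ 1 - Real.exp (-x) := by
  have : Real.exp (-x) ≤ 1 := Real.exp_le_one_iff.mpr (by linarith)
  linarith

lemma aux_le {x : ℝ} : 1 - Real.exp (-x) ≤ x := by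
  have := Real.add_one_le_exp (-x)
  linarith

lemma g_meas (τ : ℝ) : Measurable (fun x : ℝ => x ^ (1 - τ) * (1 - Real.exp (-x))) :=
  (measurable_id.pow measurable_const).mul (measurable_const.sub measurable_id.neg.exp)

lemma g_int (τ : ℝ) (h2 : 2 < τ) (h3 : τ < 3) :
    IntegrableOn (fun x : ℝ => x ^ (1 - τ) * (1 - Real.exp (-x))) (Ioi 0) := by
  have hsplit : Ioi (0:ℝ) = Ioc 0 1 ∪ Ioi 1 := (Ioc_union_Ioi_eq_Ioi zero_le_one).symm
  rw [hsplit]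
  apply IntegrableOn.union
  · have hint : IntegrableOn (fun x : ℝ => x ^ (2 - τ)) (Ioc (0:ℝ) 1) := by
      have h := intervalIntegral.intervalIntegrable_rpow' (a := (0:ℝ)) (b := 1) (r := 2 - τ)
        (by linarith)
      rwa [intervalIntegrable_iff, Set.uIoc_of_le zero_le_one] at h
    refine hint.integrable.mono' ((g_meas τ).aestronglyMeasurable) ?_
    filter_upwards [ae_restrict_mem measurableSet_Ioc] with x hx
    have hx0 : 0 < x := hx.1
    have h1 : 0 ≤ 1 - Real.exp (-x) := aux_nonneg hx0.le
    have h2' : 0 ≤ x ^ (1 - τ) := Real.rpow_nonneg hx0.le _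
    rw [Real.norm_of_nonneg (mul_nonneg h2' h1)]
    calc x ^ (1 - τ) * (1 - Real.exp (-x)) ≤ x ^ (1 - τ) * x :=
          mul_le_mul_of_nonneg_left aux_le h2'
      _ = x ^ (2 - τ) := by
          rw [show (2:ℝ) - τ = (1 - τ) + 1 by ring, Real.rpow_add_one hx0.ne']
  · have hint : IntegrableOn (fun x : ℝ => x ^ (1 - τ)) (Ioi (1:ℝ)) :=
      integrableOn_Ioi_rpow_of_lt (by linarith) zero_lt_one
    refine hint.mono' ((g_meas τ).aestronglyMeasurable) ?_
    filter_upwards [ae_restrict_mem measurableSet_Ioi] with x hx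
    have hx0 : (0:ℝ) < x := lt_trans zero_lt_one hx
    have h1 : 0 ≤ 1 - Real.exp (-x) := aux_nonneg hx0.le
    have h2' : 0 ≤ x ^ (1 - τ) := Real.rpow_nonneg hx0.le _
    rw [Real.norm_of_nonneg (mul_nonneg h2' h1)]
    have : Real.exp (-x) ≥ 0 := (Real.exp_pos _).le
    nlinarith

lemma lim_key {c : ℝ} (hc : 0 < c) :
    Tendsto (fun B : ℝ => B ^ 2 * (1 - Real.exp (-(c / B ^ 2)))) atTop (nhds c) := by
  have hf : HasDerivAt (fun s : ℝ => 1 - Real.exp (-s)) 1 0 := by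
    have h1 : HasDerivAt (fun s : ℝ => -s) (-1) 0 := (hasDerivAt_id 0).neg
    have h2 : HasDerivAt (fun s : ℝ => Real.exp (-s)) (Real.exp (-0) * (-1)) 0 := h1.exp
    have h3 := (hasDerivAt_const (0:ℝ) (1:ℝ)).sub h2
    exact (by simpa using h3 : HasDerivAt ((fun x => (1:ℝ)) - fun s => Real.exp (-s)) 1 0)
  have hslope : Tendsto (fun s : ℝ => (1 - Real.exp (-s)) / s) (nhdsWithin 0 {0}ᶜ) (nhds 1) := by
    have := hasDerivAt_iff_tendsto_slope.mp hf
    refine this.congr' ?_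
    filter_upwards [self_mem_nhdsWithin] with s hs
    simp [slope, hs, div_eq_inv_mul]
  have hs : Tendsto (fun B : ℝ => c / B ^ 2) atTop (nhdsWithin 0 {0}ᶜ) := by
    rw [tendsto_nhdsWithin_iff]
    constructor
    · exact tendsto_const_nhds.div_atTop (tendsto_pow_atTop two_ne_zero)
    · filter_upwards [eventually_gt_atTop (0:ℝ)] with B hB
      have : 0 < c / B ^ 2 := div_pos hc (by positivity)
      simp [ne_of_gt this]
  have := (hslope.comp hs).const_mul c
  rw [mul_one] at this
  refine this.congr' ?_
  filter_upwards [eventually_gt_atTop (0:ℝ)] with B hB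
  have hB2 : (0:ℝ) < B ^ 2 := by positivity
  have hc' : c ≠ 0 := hc.ne'
  simp only [Function.comp_apply]
  field_simp

/-- Large-`B` asymptotics in the paper's proof of Theorem 3. -/
theorem stmt_10 (τ μ : ℝ) (hτ2 : 2 < τ) (hτ3 : τ < 3) (hμ : 0 < μ) :
    Tendsto
      (fun B : ℝ => B ^ 2 *
        ∫ y in Set.Ioi (0 : ℝ), ∫ x in Set.Ioi (0 : ℝ),
          (x * y) ^ (-τ) * (1 - Real.exp (-x)) * (1 - Real.exp (-y))
            * (1 - Real.exp (-(μ * x * y / B ^ 2))))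
      atTop
      (nhds (μ * (∫ x in Set.Ioi (0 : ℝ), x ^ (1 - τ) * (1 - Real.exp (-x))) ^ 2)) := by
  have hgint : IntegrableOn (fun x : ℝ => x ^ (1 - τ) * (1 - Real.exp (-x))) (Ioi 0) :=
    g_int τ hτ2 hτ3
  set g : ℝ → ℝ := fun x => x ^ (1 - τ) * (1 - Real.exp (-x)) with hgdef
  set ρ : Measure (ℝ × ℝ) :=
    (volume.restrict (Ioi (0:ℝ))).prod (volume.restrict (Ioi (0:ℝ))) with hρ
  set G : ℝ → ℝ × ℝ → ℝ := fun B z =>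
    B ^ 2 * ((z.2 * z.1) ^ (-τ) * (1 - Real.exp (-z.2)) * (1 - Real.exp (-z.1))
      * (1 - Real.exp (-(μ * z.2 * z.1 / B ^ 2)))) with hGdef
  set bound : ℝ × ℝ → ℝ := fun z => (μ * g z.1) * g z.2 with hbdef
  have hbint : Integrable bound ρ := (hgint.const_mul μ).mul_prod hgint
  have haemem : ∀ᵐ z ∂ρ, z.1 ∈ Ioi (0:ℝ) ∧ z.2 ∈ Ioi (0:ℝ) := by
    rw [hρ, Measure.prod_restrict]
    filter_upwards [ae_restrict_mem (measurableSet_Ioi.prod measurableSet_Ioi)] with z hz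
    exact hz
  have hGmeas : ∀ B : ℝ, AEStronglyMeasurable (G B) ρ := by
    intro B
    apply Measurable.aestronglyMeasurable
    apply measurable_const.mul
    exact ((((measurable_snd.mul measurable_fst).pow measurable_const).mul
      (measurable_const.sub measurable_snd.neg.exp)).mul
      (measurable_const.sub measurable_fst.neg.exp)).mul
      (measurable_const.sub
        ((((measurable_const.mul measurable_snd).mul measurable_fst).div_const _).neg.exp))
  have hkey : ∀ B : ℝ, 1 ≤ B → ∀ z : ℝ × ℝ,
      z.1 ∈ Ioi (0:ℝ) → z.2 ∈ Ioi (0:ℝ) → ‖G B z‖ ≤ bound z := by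
    intro B hB z hy hx
    obtain ⟨y, x⟩ := z
    simp only [Set.mem_Ioi] at hy hx
    have hB0 : (0:ℝ) < B := lt_of_lt_of_le zero_lt_one hB
    have hB2 : (0:ℝ) < B ^ 2 := by positivity
    have hxy : (0:ℝ) < x * y := mul_pos hx hy
    have hP : 0 ≤ (x * y) ^ (-τ) * (1 - Real.exp (-x)) * (1 - Real.exp (-y)) :=
      mul_nonneg (mul_nonneg (Real.rpow_nonneg hxy.le _) (aux_nonneg hx.le)) (aux_nonneg hy.le)
    have ht : 0 ≤ μ * x * y / B ^ 2 := by positivity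
    have hGnn : 0 ≤ G B (y, x) :=
      mul_nonneg (by positivity) (mul_nonneg hP (aux_nonneg ht))
    rw [Real.norm_of_nonneg hGnn]
    have hle : B ^ 2 * (1 - Real.exp (-(μ * x * y / B ^ 2))) ≤ μ * x * y := by
      have := mul_le_mul_of_nonneg_left (aux_le (x := μ * x * y / B ^ 2)) hB2.le
      calc B ^ 2 * (1 - Real.exp (-(μ * x * y / B ^ 2)))
          ≤ B ^ 2 * (μ * x * y / B ^ 2) := this
        _ = μ * x * y := by field_simp
    have hprod : (x * y) ^ (-τ) * (μ * x * y) = μ * (x ^ (1 - τ) * y ^ (1 - τ)) := by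
      rw [Real.mul_rpow hx.le hy.le,
        show (1:ℝ) - τ = -τ + 1 by ring, Real.rpow_add_one hx.ne', Real.rpow_add_one hy.ne']
      ring
    have step : G B (y, x)
        ≤ ((x * y) ^ (-τ) * (1 - Real.exp (-x)) * (1 - Real.exp (-y))) * (μ * x * y) := by
      have h2 : G B (y, x) = ((x * y) ^ (-τ) * (1 - Real.exp (-x)) * (1 - Real.exp (-y)))
          * (B ^ 2 * (1 - Real.exp (-(μ * x * y / B ^ 2)))) := by
        simp only [hGdef]; ring
      rw [h2]
      exact mul_le_mul_of_nonneg_left hle hP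
    refine step.trans (le_of_eq ?_)
    simp only [hbdef, hgdef]
    linear_combination ((1 - Real.exp (-x)) * (1 - Real.exp (-y))) * hprod
  have hlim : ∀ᵐ z ∂ρ, Tendsto (fun B => G B z) atTop (nhds (bound z)) := by
    filter_upwards [haemem] with z hz
    obtain ⟨hy, hx⟩ := hz
    simp only [Set.mem_Ioi] at hy hx
    have hc : 0 < μ * z.2 * z.1 := by positivity
    have h := (lim_key hc).const_mul
      ((z.2 * z.1) ^ (-τ) * (1 - Real.exp (-z.2)) * (1 - Real.exp (-z.1)))
    have heq : bound z = ((z.2 * z.1) ^ (-τ) * (1 - Real.exp (-z.2)) * (1 - Real.exp (-z.1)))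
        * (μ * z.2 * z.1) := by
      have hprod : (z.2 * z.1) ^ (-τ) * (μ * z.2 * z.1)
          = μ * (z.2 ^ (1 - τ) * z.1 ^ (1 - τ)) := by
        rw [Real.mul_rpow hx.le hy.le,
          show (1:ℝ) - τ = -τ + 1 by ring, Real.rpow_add_one hx.ne', Real.rpow_add_one hy.ne']
        ring
      simp only [hbdef, hgdef]
      linear_combination (-((1 - Real.exp (-z.2)) * (1 - Real.exp (-z.1)))) * hprod
    rw [heq]
    refine h.congr fun B => ?_
    simp only [hGdef]; ring
  have hmain : Tendsto (fun B => ∫ z, G B z ∂ρ) atTop (nhds (∫ z, bound z ∂ρ)) := by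
    refine tendsto_integral_filter_of_dominated_convergence bound
      (Eventually.of_forall hGmeas) ?_ hbint hlim
    filter_upwards [eventually_ge_atTop (1:ℝ)] with B hB
    filter_upwards [haemem] with z hz
    exact hkey B hB z hz.1 hz.2
  have hval : ∫ z, bound z ∂ρ = μ * (∫ x in Ioi (0:ℝ), g x) ^ 2 := by
    rw [hρ, hbdef]
    rw [MeasureTheory.integral_prod_mul (f := fun y => μ * g y) (g := g),
      MeasureTheory.integral_const_mul]
    ring
  rw [hval] at hmain
  refine hmain.congr' ?_
  filter_upwards [eventually_ge_atTop (1:ℝ)] with B hB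
  have hGint : Integrable (G B) ρ := by
    refine hbint.mono' (hGmeas B) ?_
    filter_upwards [haemem] with z hz
    exact hkey B hB z hz.1 hz.2
  have h1 : ∫ z, G B z ∂ρ = ∫ y in Ioi (0:ℝ), ∫ x in Ioi (0:ℝ), G B (y, x) :=
    (MeasureTheory.integral_integral (f := fun y x => G B (y, x)) hGint).symm
  rw [h1]
  simp only [hGdef, MeasureTheory.integral_const_mul]
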